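/- Let G be a finite connected graph. The 1-dimensional boundary expansion constant satisfies h_1(G) = 2/diam(G) if G is a tree, and h_1(G) = 0 otherwise. -/

import Mathlib

open Finset

namespace BoundaryExpansionAux

open SimpleGraph

variable {V : Type*} [Fintype V] [DecidableEq V] (G : SimpleGraph V) [DecidableRel G.Adj]


lemma zmod2_ne_zero : ∀ a : ZMod 2, a ≠ 0 → a = 1 := by decide

lemma walk_boundary {u v : V} (p : G.Walk u v) (hnd : p.edges.Nodup) (w : V) :
    ∑ e ∈ G.incidenceFinset w, (if e ∈ p.edges then (1 : ZMod 2) else 0)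
      = (if w = u then 1 else 0) + (if w = v then 1 else 0) := by
  induction p with
  | nil =>
    rename_i z
    simp only [SimpleGraph.Walk.edges_nil, List.not_mem_nil, if_false, Finset.sum_const_zero]
    by_cases h : w = z
    · simp only [h, if_pos rfl]; decide
    · simp [h]
  | @cons a x c h q ih =>
    rw [SimpleGraph.Walk.edges_cons, List.nodup_cons] at hnd
    rw [SimpleGraph.Walk.edges_cons]
    have split : ∀ e : Sym2 V, (if e ∈ s(a, x) :: q.edges then (1 : ZMod 2) else 0)
        = (if e = s(a, x) then (1 : ZMod 2) else 0) + (if e ∈ q.edges then 1 else 0) := by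
      intro e
      by_cases h1 : e = s(a, x)
      · subst h1; simp [hnd.1]
      · by_cases h2 : e ∈ q.edges <;> simp [h1, h2]
    have hmem : s(a, x) ∈ G.incidenceFinset w ↔ w = a ∨ w = x := by
      rw [SimpleGraph.mem_incidenceFinset]
      constructor
      · intro hh
        simpa [Sym2.mem_iff] using hh.2
      · rintro (rfl | rfl)
        · exact ⟨h, Sym2.mem_mk_left _ _⟩
        · exact ⟨h, Sym2.mem_mk_right _ _⟩
    have hax : a ≠ x := h.ne
    have hor : (if s(a, x) ∈ G.incidenceFinset w then (1 : ZMod 2) else 0)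
        = (if w = a then 1 else 0) + (if w = x then 1 else 0) := by
      by_cases h1 : w = a <;> by_cases h2 : w = x
      · exact absurd (h1.symm.trans h2) hax
      all_goals simp [hmem, h1, h2, hax, Ne.symm hax]
    calc ∑ e ∈ G.incidenceFinset w, (if e ∈ s(a, x) :: q.edges then (1 : ZMod 2) else 0)
        = ∑ e ∈ G.incidenceFinset w, ((if e = s(a, x) then (1 : ZMod 2) else 0)
            + (if e ∈ q.edges then 1 else 0)) := Finset.sum_congr rfl (fun e _ => split e)
      _ = (if s(a, x) ∈ G.incidenceFinset w then (1 : ZMod 2) else 0)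
            + ((if w = x then 1 else 0) + (if w = c then 1 else 0)) := by
          rw [Finset.sum_add_distrib,
            Finset.sum_ite_eq' (G.incidenceFinset w) s(a,x) (fun _ => (1 : ZMod 2)), ih hnd.2]
      _ = (if w = a then 1 else 0) + (if w = c then 1 else 0) := by
          rw [hor]
          have key : ∀ A X C : ZMod 2, (A + X) + (X + C) = A + C := by decide
          exact key _ _ _



lemma boundary_card (α : Sym2 V → ZMod 2) (w : V) :
    ∑ e ∈ G.incidenceFinset w, α e
      = (((G.incidenceFinset w).filter (fun e => α e ≠ 0)).card : ZMod 2) := by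
  classical
  rw [← Finset.sum_filter_ne_zero]
  rw [Finset.sum_congr rfl (fun e he => zmod2_ne_zero _ (Finset.mem_filter.mp he).2)]
  simp

lemma ext_lemma (hT : G.IsAcyclic) (α : Sym2 V → ZMod 2)
    (hsupp : ∀ e, α e ≠ 0 → e ∈ G.edgeSet)
    {u v : V} (p : G.Walk u v) (hp : p.IsPath) (hpe : ∀ e ∈ p.edges, α e ≠ 0)
    (hlen : p.length ≠ 0)
    (hDu : ∑ e ∈ G.incidenceFinset u, α e = 0) :
    ∃ (w : V) (h : G.Adj w u), (SimpleGraph.Walk.cons h p).IsPath ∧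
      (∀ e ∈ (SimpleGraph.Walk.cons h p).edges, α e ≠ 0) := by
  classical
  -- p is a cons
  cases p with
  | nil => simp at hlen
  | @cons u x c h0 q =>
  rw [SimpleGraph.Walk.cons_isPath_iff] at hp
  set p := SimpleGraph.Walk.cons h0 q with hpdef
  have hpe0 : α s(u, x) ≠ 0 := hpe _ (by simp [hpdef])
  set Fu := (G.incidenceFinset u).filter (fun e => α e ≠ 0) with hFu
  have he0 : s(u, x) ∈ Fu := by
    rw [hFu, Finset.mem_filter, SimpleGraph.mem_incidenceFinset]
    exact ⟨⟨hsupp _ hpe0, Sym2.mem_mk_left _ _⟩, hpe0⟩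
  have hcard0 : ((Fu.card : ℕ) : ZMod 2) = 0 := by
    rw [← boundary_card G α u] at *; exact hDu
  have hdvd : 2 ∣ Fu.card := (ZMod.natCast_eq_zero_iff _ 2).mp hcard0
  have h1lt : 1 < Fu.card := by
    have h1 : 1 ≤ Fu.card := Finset.card_pos.mpr ⟨_, he0⟩
    omega
  obtain ⟨e', he', hne'⟩ := Finset.exists_mem_ne h1lt s(u, x)
  rw [hFu, Finset.mem_filter, SimpleGraph.mem_incidenceFinset] at he'
  obtain ⟨⟨he'E, hue'⟩, he'α⟩ := he'
  obtain ⟨w, rfl⟩ := Sym2.mem_iff_exists.mp hue'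
  have hadj : G.Adj u w := (SimpleGraph.mem_edgeSet G).mp he'E
  -- e' not an edge of p
  have he'p : s(u, w) ∉ p.edges := by
    intro hmem
    rw [hpdef, SimpleGraph.Walk.edges_cons, List.mem_cons] at hmem
    rcases hmem with heq | hmem
    · exact hne' heq
    · exact hp.2 (q.fst_mem_support_of_mem_edges hmem)
  -- w not in the support of p
  have hwp : w ∉ p.support := by
    intro hw
    have h1 : (SimpleGraph.Path.singleton hadj : G.Path u w)
        = ⟨p.takeUntil w hw, (hp.1.cons hp.2 : p.IsPath).takeUntil hw⟩ :=
      SimpleGraph.isAcyclic_iff_path_unique.mp hT _ _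
    have h2 : s(u, w) ∈ (p.takeUntil w hw).edges := by
      have := congrArg (fun r : G.Path u w => (r : G.Walk u w).edges) h1
      simp only [SimpleGraph.Path.singleton] at this
      rw [← this]
      simp
    exact he'p (SimpleGraph.Walk.edges_takeUntil_subset p hw h2)
  refine ⟨w, hadj.symm, ?_, ?_⟩
  · rw [SimpleGraph.Walk.cons_isPath_iff]
    exact ⟨hp.1.cons hp.2, hwp⟩
  · intro e he
    rw [SimpleGraph.Walk.edges_cons, List.mem_cons] at he
    rcases he with rfl | he
    · rw [Sym2.eq_swap]; exact he'α
    · exact hpe _ he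


lemma tree_lower (hconn : G.Connected) (hT : G.IsAcyclic) :
    ∀ k : ℕ, ∀ α : Sym2 V → ZMod 2, (univ.filter (fun e => α e ≠ 0)).card = k →
    (∀ e, α e ≠ 0 → e ∈ G.edgeSet) → α ≠ 0 →
    2 * k ≤ (univ.filter (fun w => (∑ e ∈ G.incidenceFinset w, α e) ≠ 0)).card * G.diam := by
  classical
  intro k
  induction k using Nat.strong_induction_on with
  | _ k IH =>
  intro α hk hsupp hα0
  -- the set of achievable path lengths
  set L : Set ℕ := {n | ∃ (u v : V) (p : G.Walk u v), p.IsPath ∧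
    (∀ e ∈ p.edges, α e ≠ 0) ∧ p.length = n} with hL
  have hbdd : BddAbove L := by
    refine ⟨Fintype.card V, fun n hn => ?_⟩
    obtain ⟨u, v, p, hp, -, rfl⟩ := hn
    exact le_of_lt hp.length_lt
  have h1L : 1 ∈ L := by
    have : ∃ e, α e ≠ 0 := by
      by_contra hcon
      push_neg at hcon
      exact hα0 (funext fun e => hcon e)
    obtain ⟨e, he⟩ := this
    have heE := hsupp e he
    induction e using Sym2.ind with
    | _ a b =>
      have hadj : G.Adj a b := (G.mem_edgeSet).mp heE
      exact ⟨a, b, SimpleGraph.Walk.cons hadj SimpleGraph.Walk.nil,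
        (SimpleGraph.Path.singleton hadj).2, by simpa using he, by simp⟩
  have hLne : L.Nonempty := ⟨1, h1L⟩
  set N := sSup L with hN
  have hNmem : N ∈ L := Nat.sSup_mem hLne hbdd
  have hN1 : 1 ≤ N := le_csSup hbdd h1L
  obtain ⟨u, v, p, hp, hpe, hplen⟩ := hNmem
  -- boundary is nonzero at u
  have hDu : (∑ e ∈ G.incidenceFinset u, α e) ≠ 0 := by
    intro hcon
    obtain ⟨w, h, hp', hpe'⟩ := ext_lemma G hT α hsupp p hp hpe (by omega) hcon
    have : N + 1 ∈ L := ⟨w, v, _, hp', hpe', by simp [hplen]⟩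
    have := le_csSup hbdd this
    omega
  have hDv : (∑ e ∈ G.incidenceFinset v, α e) ≠ 0 := by
    intro hcon
    obtain ⟨w, h, hp', hpe'⟩ := ext_lemma G hT α hsupp p.reverse hp.reverse
      (fun e he => hpe e (by simpa using he)) (by rw [SimpleGraph.Walk.length_reverse]; omega) hcon
    have : N + 1 ∈ L := ⟨w, u, _, hp', hpe', by simp [hplen]⟩
    have := le_csSup hbdd this
    omega
  -- u ≠ v
  have huv : u ≠ v := by
    cases p with
    | nil => simp at hplen; omega
    | cons h0 q =>
      rw [SimpleGraph.Walk.cons_isPath_iff] at hp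
      intro hcon
      exact hp.2 (hcon ▸ q.end_mem_support)
  -- length bounded by diam
  have hediam : G.ediam ≠ ⊤ := by
    have : Nonempty V := hconn.nonempty
    obtain ⟨a0, b0, hab⟩ := G.exists_edist_eq_ediam_of_finite
    rw [← hab]
    exact (SimpleGraph.edist_ne_top_iff_reachable).mpr (hconn a0 b0)
  have hNdiam : N ≤ G.diam := by
    obtain ⟨q, hq, hqlen⟩ := hconn.exists_path_of_dist u v
    have : (⟨p, hp⟩ : G.Path u v) = ⟨q, hq⟩ :=
      SimpleGraph.isAcyclic_iff_path_unique.mp hT _ _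
    have hpq : p = q := congrArg Subtype.val this
    rw [← hplen, hpq, hqlen]
    exact SimpleGraph.dist_le_diam hediam
  -- modified cochain
  set α' : Sym2 V → ZMod 2 := fun e => α e + (if e ∈ p.edges then 1 else 0) with hα'
  set S := univ.filter (fun e => α e ≠ 0) with hS
  set S' := univ.filter (fun e => α' e ≠ 0) with hS'def
  set T := p.edges.toFinset with hTdef
  have hTS : T ⊆ S := by
    intro e he
    rw [hTdef, List.mem_toFinset] at he
    rw [hS, Finset.mem_filter]
    exact ⟨Finset.mem_univ _, hpe _ he⟩
  have hTcard : T.card = N := by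
    rw [hTdef, List.toFinset_card_of_nodup hp.edges_nodup, SimpleGraph.Walk.length_edges, hplen]
  have hS'eq : S' = S \ T := by
    ext e
    rw [hS'def, hS, hTdef, Finset.mem_sdiff, Finset.mem_filter, Finset.mem_filter,
      List.mem_toFinset]
    by_cases hmem : e ∈ p.edges
    · have h1 : α e = 1 := zmod2_ne_zero _ (hpe _ hmem)
      have : α' e = 0 := by rw [hα']; simp [hmem, h1]; decide
      simp [this, hmem]
    · have : α' e = α e := by rw [hα']; simp [hmem]
      simp [this, hmem]
  have hS'card : S'.card = k - N := by
    rw [hS'eq, Finset.card_sdiff_of_subset hTS, hTcard, hk]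
  have hNk : N ≤ k := by rw [← hk, ← hTcard]; exact Finset.card_le_card hTS
  -- boundary of α'
  have hD' : ∀ w, (∑ e ∈ G.incidenceFinset w, α' e)
      = (∑ e ∈ G.incidenceFinset w, α e)
        + ((if w = u then 1 else 0) + (if w = v then 1 else 0)) := by
    intro w
    rw [hα']
    rw [Finset.sum_add_distrib, walk_boundary G p hp.edges_nodup w]
  set B := univ.filter (fun w => (∑ e ∈ G.incidenceFinset w, α e) ≠ 0) with hB
  set B' := univ.filter (fun w => (∑ e ∈ G.incidenceFinset w, α' e) ≠ 0) with hB'def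
  have huB : u ∈ B := by rw [hB, Finset.mem_filter]; exact ⟨Finset.mem_univ _, hDu⟩
  have hvB : v ∈ B := by rw [hB, Finset.mem_filter]; exact ⟨Finset.mem_univ _, hDv⟩
  have hpairB : ({u, v} : Finset V) ⊆ B := by
    intro w hw
    rcases Finset.mem_insert.mp hw with rfl | hw
    · exact huB
    · rw [Finset.mem_singleton] at hw; exact hw ▸ hvB
  have hB'eq : B' = B \ {u, v} := by
    ext w
    rw [hB'def, hB, Finset.mem_sdiff, Finset.mem_filter, Finset.mem_filter]
    by_cases h1 : w = u
    · subst h1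
      have : (∑ e ∈ G.incidenceFinset w, α' e) = 0 := by
        rw [hD', zmod2_ne_zero _ hDu]
        simp [huv]
        decide
      simp [this]
    · by_cases h2 : w = v
      · subst h2
        have : (∑ e ∈ G.incidenceFinset w, α' e) = 0 := by
          rw [hD', zmod2_ne_zero _ hDv]
          simp [h1]
          decide
        simp [this]
      · have : (∑ e ∈ G.incidenceFinset w, α' e) = (∑ e ∈ G.incidenceFinset w, α e) := by
          rw [hD']
          simp [h1, h2]
        simp [this, h1, h2]
  have hpaircard : ({u, v} : Finset V).card = 2 := by
    rw [Finset.card_insert_of_notMem (by simpa using huv), Finset.card_singleton]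
  have hB'card : B'.card = B.card - 2 := by
    rw [hB'eq, Finset.card_sdiff_of_subset hpairB, hpaircard]
  have hB2 : 2 ≤ B.card := by
    rw [← hpaircard]; exact Finset.card_le_card hpairB
  -- case split on α' = 0
  by_cases hα'0 : α' = 0
  · -- k = N ≤ diam
    have hS'empty : S' = ∅ := by
      rw [hS'def, hα'0]
      simp
    have : S ⊆ T := by
      rw [← Finset.sdiff_eq_empty_iff_subset, ← hS'eq, hS'empty]
    have hkN : k ≤ N := by rw [← hk, ← hTcard]; exact Finset.card_le_card this
    have hkdiam : k ≤ G.diam := le_trans hkN hNdiam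
    calc 2 * k ≤ 2 * G.diam := Nat.mul_le_mul_left 2 hkdiam
      _ ≤ B.card * G.diam := Nat.mul_le_mul_right _ hB2
  · -- induction
    have hlt : k - N < k := by omega
    have hIH := IH (k - N) hlt α' (by rw [← hS'card, hS'def]) (fun e he => ?_) hα'0
    swap
    · -- support of α' in edgeSet
      rw [hα'] at he
      by_cases hmem : e ∈ p.edges
      · exact p.edges_subset_edgeSet hmem
      · apply hsupp
        simpa [hmem] using he
    rw [← hB'def] at hIH  -- might not be needed
    have hIH2 : 2 * (k - N) ≤ (B.card - 2) * G.diam := by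
      rw [← hB'card]; exact hIH
    have h2N : 2 * N ≤ 2 * G.diam := Nat.mul_le_mul_left 2 hNdiam
    have e2 : (B.card - 2) * G.diam + 2 * G.diam = B.card * G.diam := by
      rw [← Nat.add_mul]
      congr 1
      omega
    calc 2 * k = 2 * (k - N) + 2 * N := by omega
      _ ≤ (B.card - 2) * G.diam + 2 * G.diam := Nat.add_le_add hIH2 h2N
      _ = B.card * G.diam := e2

end BoundaryExpansionAux

open BoundaryExpansionAux SimpleGraph


theorem boundary_expansion_of_graph {V : Type*} [Fintype V] [DecidableEq V]
    (G : SimpleGraph V) [DecidableRel G.Adj] (hconn : G.Connected) :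
    (G.IsTree →
      sInf {r : ℝ | ∃ α : Sym2 V → ZMod 2,
          (∀ e, α e ≠ 0 → e ∈ G.edgeSet) ∧ α ≠ 0 ∧
          r = ((Finset.univ.filter
                (fun v : V => (∑ e ∈ G.incidenceFinset v, α e) ≠ 0)).card : ℝ) /
              ((Finset.univ.filter (fun e : Sym2 V => α e ≠ 0)).card : ℝ)} =
        2 / (G.diam : ℝ)) ∧
    (¬ G.IsTree →
      sInf {r : ℝ | ∃ α : Sym2 V → ZMod 2,
          (∀ e, α e ≠ 0 → e ∈ G.edgeSet) ∧ α ≠ 0 ∧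
          r = ((Finset.univ.filter
                (fun v : V => (∑ e ∈ G.incidenceFinset v, α e) ≠ 0)).card : ℝ) /
              ((Finset.univ.filter (fun e : Sym2 V => α e ≠ 0)).card : ℝ)} = 0) := by
  classical
  set S : Set ℝ := {r : ℝ | ∃ α : Sym2 V → ZMod 2,
      (∀ e, α e ≠ 0 → e ∈ G.edgeSet) ∧ α ≠ 0 ∧
      r = ((Finset.univ.filter
            (fun v : V => (∑ e ∈ G.incidenceFinset v, α e) ≠ 0)).card : ℝ) /
          ((Finset.univ.filter (fun e : Sym2 V => α e ≠ 0)).card : ℝ)} with hSdef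
  constructor
  · -- tree case
    intro hT
    rcases subsingleton_or_nontrivial V with hsub | hnontriv
    · -- subsingleton: S is empty and diam = 0
      have hE : G.edgeSet = ∅ := by
        ext e
        induction e using Sym2.ind with
        | _ a b =>
          simp only [SimpleGraph.mem_edgeSet, Set.mem_empty_iff_false, iff_false]
          intro h
          exact h.ne (Subsingleton.elim a b)
      have hSempty : S = ∅ := by
        rw [hSdef]
        ext r
        simp only [Set.mem_setOf_eq, Set.mem_empty_iff_false, iff_false]
        rintro ⟨α, hsupp, hα0, -⟩
        apply hα0
        funext e
        by_contra hc
        have := hsupp e hc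
        rw [hE] at this
        exact this
      rw [hSempty, Real.sInf_empty]
      have : G.diam = 0 := by
        rw [SimpleGraph.diam, SimpleGraph.ediam_eq_zero_of_subsingleton]
        rfl
      rw [this]
      norm_num
    · -- nontrivial
      have hnV : Nonempty V := hconn.nonempty
      have hediam : G.ediam ≠ ⊤ := by
        obtain ⟨a0, b0, hab⟩ := G.exists_edist_eq_ediam_of_finite
        rw [← hab]
        exact (SimpleGraph.edist_ne_top_iff_reachable).mpr (hconn a0 b0)
      have hdiam0 : G.diam ≠ 0 := by
        rw [SimpleGraph.diam, Ne, ENat.toNat_eq_zero]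
        push_neg
        exact ⟨G.ediam_ne_zero, hediam⟩
      have hdiamR : (0 : ℝ) < (G.diam : ℝ) := by
        exact_mod_cast Nat.pos_of_ne_zero hdiam0
      -- lower bound
      have hlb : ∀ r ∈ S, 2 / (G.diam : ℝ) ≤ r := by
        rintro r ⟨α, hsupp, hα0, rfl⟩
        set k := (Finset.univ.filter (fun e : Sym2 V => α e ≠ 0)).card with hk
        set ℓ := (Finset.univ.filter
          (fun v : V => (∑ e ∈ G.incidenceFinset v, α e) ≠ 0)).card with hℓ
        have hkey : 2 * k ≤ ℓ * G.diam := tree_lower G hconn hT.IsAcyclic k α rfl hsupp hα0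
        have hk1 : 0 < k := by
          rw [hk]
          apply Finset.card_pos.mpr
          have : ∃ e, α e ≠ 0 := by
            by_contra hcon
            push_neg at hcon
            exact hα0 (funext fun e => hcon e)
          obtain ⟨e, he⟩ := this
          exact ⟨e, Finset.mem_filter.mpr ⟨Finset.mem_univ _, he⟩⟩
        have hkR : (0 : ℝ) < (k : ℝ) := by exact_mod_cast hk1
        rw [div_le_div_iff₀ hdiamR hkR]
        exact_mod_cast hkey
      -- membership
      have hmem : 2 / (G.diam : ℝ) ∈ S := by
        obtain ⟨u, v, hdist⟩ := G.exists_dist_eq_diam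
        obtain ⟨q, hq, hqlen⟩ := hconn.exists_path_of_dist u v
        have hqdiam : q.length = G.diam := by rw [hqlen, hdist]
        have huv : u ≠ v := by
          intro hcon
          subst hcon
          rw [SimpleGraph.dist_self] at hdist
          exact hdiam0 hdist.symm
        set α : Sym2 V → ZMod 2 := fun e => if e ∈ q.edges then 1 else 0 with hα
        have hsupp : ∀ e, α e ≠ 0 → e ∈ G.edgeSet := by
          intro e he
          rw [hα] at he
          by_cases hmem : e ∈ q.edges
          · exact q.edges_subset_edgeSet hmem
          · simp [hmem] at he
        have hqne : q.edges ≠ [] := by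
          intro hnil
          have := q.length_edges
          rw [hnil] at this
          simp at this
          omega
        obtain ⟨e0, he0⟩ := List.exists_mem_of_ne_nil _ hqne
        have hα0 : α ≠ 0 := by
          intro hcon
          have : α e0 = 0 := by rw [hcon]; rfl
          rw [hα] at this
          simp [he0] at this
        refine ⟨α, hsupp, hα0, ?_⟩
        have hBeq : (Finset.univ.filter
            (fun w : V => (∑ e ∈ G.incidenceFinset w, α e) ≠ 0)) = {u, v} := by
          ext w
          rw [Finset.mem_filter]
          rw [hα]
          rw [walk_boundary G q hq.edges_nodup w]
          by_cases h1 : w = u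
          · subst h1
            simp [huv]
          · by_cases h2 : w = v
            · subst h2
              simp [h1, Ne.symm huv]
            · simp [h1, h2]
        have hEeq : (Finset.univ.filter (fun e : Sym2 V => α e ≠ 0)) = q.edges.toFinset := by
          ext e
          rw [Finset.mem_filter, hα, List.mem_toFinset]
          by_cases hmem : e ∈ q.edges <;> simp [hmem]
        rw [hBeq, hEeq]
        rw [Finset.card_insert_of_notMem (by simpa using huv), Finset.card_singleton,
          List.toFinset_card_of_nodup hq.edges_nodup, SimpleGraph.Walk.length_edges, hqdiam]
        norm_num
      exact le_antisymm (csInf_le ⟨2 / (G.diam : ℝ), hlb⟩ hmem) (le_csInf ⟨_, hmem⟩ hlb)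
  · -- non-tree case
    intro hnT
    have hnA : ¬ G.IsAcyclic := by
      intro hA
      exact hnT ⟨hconn, hA⟩
    rw [SimpleGraph.IsAcyclic] at hnA
    push_neg at hnA
    obtain ⟨v, c, hc⟩ := hnA
    set α : Sym2 V → ZMod 2 := fun e => if e ∈ c.edges then 1 else 0 with hα
    have hsupp : ∀ e, α e ≠ 0 → e ∈ G.edgeSet := by
      intro e he
      rw [hα] at he
      by_cases hmem : e ∈ c.edges
      · exact c.edges_subset_edgeSet hmem
      · simp [hmem] at he
    have hcne : c.edges ≠ [] := by
      intro hnil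
      have h3 := hc.three_le_length
      have := c.length_edges
      rw [hnil] at this
      simp at this
      omega
    obtain ⟨e0, he0⟩ := List.exists_mem_of_ne_nil _ hcne
    have hα0 : α ≠ 0 := by
      intro hcon
      have : α e0 = 0 := by rw [hcon]; rfl
      rw [hα] at this
      simp [he0] at this
    have h0mem : (0 : ℝ) ∈ S := by
      refine ⟨α, hsupp, hα0, ?_⟩
      have hBempty : (Finset.univ.filter
          (fun w : V => (∑ e ∈ G.incidenceFinset w, α e) ≠ 0)) = ∅ := by
        apply Finset.filter_eq_empty_iff.mpr
        intro w _
        rw [hα, walk_boundary G c hc.isTrail.edges_nodup w]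
        push_neg
        by_cases h1 : w = v <;> simp [h1]
        decide
      rw [hBempty]
      simp
    have hlb0 : ∀ r ∈ S, (0 : ℝ) ≤ r := by
      rintro r ⟨β, -, -, rfl⟩
      positivity
    exact le_antisymm (csInf_le ⟨0, hlb0⟩ h0mem) (le_csInf ⟨_, h0mem⟩ hlb0)
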